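/- The set A = ⋃_{n≥1} {k ∈ ℕ : 2·10^(n-1)+2 ≤ k ≤ 10^n} ∪ {0,1,...,10} is an additive basis of order at most 3, i.e., every natural number can be written as a sum of three elements of A. -/

import Mathlib

/-- The set `A = {0,...,10} ∪ ⋃_{n≥2} {2·10^(n-1)+2, ..., 10^n}`. -/
def A : Set ℕ := Set.Iic 10 ∪ ⋃ n ∈ Set.Ici 2, Set.Icc (2 * 10 ^ (n - 1) + 2) (10 ^ n)

lemma memA_small {x : ℕ} (h : x ≤ 10) : x ∈ A := Or.inl h

lemma memA_block {n x : ℕ} (hn : 2 ≤ n) (h1 : 2 * 10 ^ (n - 1) + 2 ≤ x)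
    (h2 : x ≤ 10 ^ n) : x ∈ A := by
  right
  simp only [Set.mem_iUnion, Set.mem_Ici, Set.mem_Icc]
  exact ⟨n, hn, h1, h2⟩

theorem stmt_0 : ∀ N : ℕ, ∃ a b c : ℕ, a ∈ A ∧ b ∈ A ∧ c ∈ A ∧ a + b + c = N := by
  intro N
  by_cases h10 : N ≤ 10
  · exact ⟨N, 0, 0, memA_small h10, memA_small (by omega), memA_small (by omega), by omega⟩
  by_cases h20 : N ≤ 20
  · exact ⟨10, N - 10, 0, memA_small (le_refl 10), memA_small (by omega),
      memA_small (by omega), by omega⟩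
  by_cases h21 : N = 21
  · exact ⟨10, 10, 1, memA_small (le_refl 10), memA_small (by norm_num),
      memA_small (by norm_num), by omega⟩
  -- Now N ≥ 22
  have hN22 : 22 ≤ N := by omega
  set n := Nat.log 10 N with hn
  have hn1 : 1 ≤ n := by
    rw [hn, Nat.le_log_iff_pow_le (by norm_num) (by omega)]
    omega
  have hlow : 10 ^ n ≤ N := Nat.pow_log_le_self 10 (by omega)
  have hhigh : N < 10 ^ (n + 1) := Nat.lt_pow_succ_log_self (by norm_num) N
  have hsplit : 10 ^ n = 10 * 10 ^ (n - 1) := by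
    rw [← pow_succ']
    congr 1
    omega
  have hsplit' : 10 ^ (n + 1) = 10 * 10 ^ n := by rw [pow_succ']
  have hx1 : 1 ≤ 10 ^ (n - 1) := Nat.one_le_pow _ _ (by norm_num)
  by_cases hb : 2 * 10 ^ n + 2 ≤ N
  · -- N is in block n+1
    refine ⟨N, 0, 0, memA_block (n := n + 1) (by omega) ?_ ?_, memA_small (by omega),
      memA_small (by omega), by omega⟩
    · simpa using hb
    · omega
  by_cases hc : N ≤ 10 ^ n + 10
  · -- N = 10^n + small
    have hpow : (10 : ℕ) ^ n ∈ A := by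
      rcases Nat.lt_or_ge n 2 with h | h
      · interval_cases n
        · exact memA_small (by norm_num)
      · exact memA_block h (by omega) (le_refl _)
    exact ⟨10 ^ n, N - 10 ^ n, 0, hpow, memA_small (by omega), memA_small (by omega), by omega⟩
  -- gap case: 10^n + 11 ≤ N ≤ 2·10^n + 1
  have hn2 : 2 ≤ n := by
    by_contra h
    interval_cases n <;> simp_all <;> omega
  have hx10 : 10 ≤ 10 ^ (n - 1) := by
    calc (10:ℕ) = 10 ^ 1 := (pow_one 10).symm
    _ ≤ 10 ^ (n - 1) := Nat.pow_le_pow_right (by norm_num) (by omega)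
  -- correction c, midpoint split
  set c := N - 2 * 10 ^ n with hcdef
  have hcle : c ≤ 1 := by omega
  set M := N - c with hM
  have hM1 : 10 ^ n + 10 ≤ M := by omega
  have hM2 : M ≤ 2 * 10 ^ n := by omega
  refine ⟨M / 2, M - M / 2, c, memA_block hn2 (by omega) (by omega),
    memA_block hn2 (by omega) (by omega), memA_small (by omega), by omega⟩
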